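/- Let X be a topological vector space, Y ⊆ X a closed subspace, and A ⊆ X an open convex set intersecting Y. Assume: (a) every continuous quasiconvex function on A ∩ Y extends to a continuous quasiconvex function on A; (b) there exists a continuous quasiconvex function δ : A → [0,∞) with δ⁻¹(0) = A ∩ Y. Then each non-constant continuous quasiconvex function f : A ∩ Y → ℝ admits a continuous quasiconvex extension F : A → ℝ such that F(A) = f(A ∩ Y) and, with a := inf F(A), the set {x ∈ A : F(x) = a} equals {y ∈ A ∩ Y : f(y) = a}. -/

import Mathlib

open Set

noncomputable def tauFn (c k : ℝ) : ℝ → ℝ :=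
  fun s => c - max (c - s) 0 + k * max (s - c) 0 / (k + max (s - c) 0)

noncomputable def sigmaFn (c k : ℝ) : ℝ → ℝ :=
  fun t => c - max (c - t) 0 + k * max (t - c) 0 / (k - max (t - c) 0)

lemma tauFn_mono (c k : ℝ) (hk : 0 < k) : Monotone (tauFn c k) := by
  intro a b hab
  unfold tauFn
  have h0a : (0:ℝ) ≤ max (a - c) 0 := le_max_right _ _
  have h0b : (0:ℝ) ≤ max (b - c) 0 := le_max_right _ _
  have h1 : max (a - c) 0 ≤ max (b - c) 0 := max_le_max (by linarith) le_rfl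
  have h2 : max (c - b) 0 ≤ max (c - a) 0 := max_le_max (by linarith) le_rfl
  have hda : 0 < k + max (a - c) 0 := by linarith
  have hdb : 0 < k + max (b - c) 0 := by linarith
  have h3 : k * max (a - c) 0 / (k + max (a - c) 0)
      ≤ k * max (b - c) 0 / (k + max (b - c) 0) := by
    rw [div_le_div_iff₀ hda hdb]
    nlinarith [mul_le_mul_of_nonneg_left h1 (mul_nonneg hk.le hk.le)]
  linarith

lemma tauFn_cont (c k : ℝ) (hk : 0 < k) : Continuous (tauFn c k) := by
  have hmax : Continuous fun s : ℝ => max (s - c) 0 :=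
    (continuous_id.sub continuous_const).max continuous_const
  have hmax2 : Continuous fun s : ℝ => max (c - s) 0 :=
    (continuous_const.sub continuous_id).max continuous_const
  exact (continuous_const.sub hmax2).add
    ((continuous_const.mul hmax).div (continuous_const.add hmax)
      (fun s => by have := le_max_right (s - c) (0:ℝ); intro h; nlinarith))

lemma tauFn_lt (c k : ℝ) (hk : 0 < k) (s : ℝ) : tauFn c k s < c + k := by
  unfold tauFn
  have h0 : (0:ℝ) ≤ max (s - c) 0 := le_max_right _ _
  have h1 : (0:ℝ) ≤ max (c - s) 0 := le_max_right _ _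
  have hd : 0 < k + max (s - c) 0 := by linarith
  have h2 : k * max (s - c) 0 / (k + max (s - c) 0) < k := by
    rw [div_lt_iff₀ hd]; nlinarith
  linarith

lemma sigmaFn_max_lt (c k : ℝ) (hk : 0 < k) {t : ℝ} (ht : t < c + k) :
    max (t - c) 0 < k := max_lt (by linarith) hk

lemma sigmaFn_contOn (c k : ℝ) (hk : 0 < k) : ContinuousOn (sigmaFn c k) (Iio (c + k)) := by
  have hmax : Continuous fun s : ℝ => max (s - c) 0 :=
    (continuous_id.sub continuous_const).max continuous_const
  have hmax2 : Continuous fun s : ℝ => max (c - s) 0 :=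
    (continuous_const.sub continuous_id).max continuous_const
  exact (continuousOn_const.sub hmax2.continuousOn).add
    ((continuousOn_const.mul hmax.continuousOn).div
      (continuousOn_const.sub hmax.continuousOn)
      (fun t ht => by have := sigmaFn_max_lt c k hk ht; intro h; nlinarith))

lemma sigmaFn_monoOn (c k : ℝ) (hk : 0 < k) : MonotoneOn (sigmaFn c k) (Iio (c + k)) := by
  intro a ha b hb hab
  unfold sigmaFn
  have h0a : (0:ℝ) ≤ max (a - c) 0 := le_max_right _ _
  have h0b : (0:ℝ) ≤ max (b - c) 0 := le_max_right _ _
  have hak : max (a - c) 0 < k := sigmaFn_max_lt c k hk ha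
  have hbk : max (b - c) 0 < k := sigmaFn_max_lt c k hk hb
  have h1 : max (a - c) 0 ≤ max (b - c) 0 := max_le_max (by linarith) le_rfl
  have h2 : max (c - b) 0 ≤ max (c - a) 0 := max_le_max (by linarith) le_rfl
  have h3 : k * max (a - c) 0 / (k - max (a - c) 0)
      ≤ k * max (b - c) 0 / (k - max (b - c) 0) := by
    rw [div_le_div_iff₀ (by linarith : (0:ℝ) < k - max (a - c) 0) (by linarith : (0:ℝ) < k - max (b - c) 0)]
    nlinarith [mul_le_mul_of_nonneg_left h1 (mul_nonneg hk.le hk.le)]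
  linarith

lemma tauFn_sigmaFn (c k : ℝ) (hk : 0 < k) {t : ℝ} (ht : t < c + k) :
    tauFn c k (sigmaFn c k t) = t := by
  rcases le_or_gt t c with h | h
  · have h1 : max (t - c) 0 = 0 := max_eq_right (by linarith)
    have h2 : max (c - t) 0 = c - t := max_eq_left (by linarith)
    have hσ : sigmaFn c k t = t := by
      unfold sigmaFn; rw [h1, h2]; simp
    rw [hσ]; unfold tauFn; rw [h1, h2]; simp
  · have hu : max (t - c) 0 = t - c := max_eq_left (by linarith)
    have hcu : max (c - t) 0 = 0 := max_eq_right (by linarith)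
    have hu0 : 0 < t - c := by linarith
    have huk : t - c < k := by linarith
    have hku : 0 < k - (t - c) := by linarith
    set w : ℝ := k * (t - c) / (k - (t - c)) with hw
    have hw0 : 0 < w := div_pos (mul_pos hk hu0) hku
    have hσ : sigmaFn c k t = c + w := by
      unfold sigmaFn; rw [hu, hcu, ← hw]; ring
    rw [hσ]
    unfold tauFn
    have e1 : c + w - c = w := by ring
    have e2 : max (c + w - c) 0 = w := by rw [e1]; exact max_eq_left hw0.le
    have e3 : max (c - (c + w)) 0 = 0 := max_eq_right (by linarith)
    rw [e2, e3]
    have hkw : (0:ℝ) < k + w := by linarith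
    have : k * w / (k + w) = t - c := by
      rw [hw]
      field_simp
      ring
    rw [this]; ring

lemma qcMinConst {E : Type*} [AddCommMonoid E] [SMul ℝ E] {s : Set E} {H : E → ℝ}
    (hs : Convex ℝ s) (hH : QuasiconvexOn ℝ s H) (M : ℝ) :
    QuasiconvexOn ℝ s (fun x => min (H x) M) := by
  intro b
  by_cases hMb : M ≤ b
  · have he : {x ∈ s | min (H x) M ≤ b} = s := by
      ext x; simp only [Set.mem_sep_iff, min_le_iff]
      exact ⟨fun h => h.1, fun h => ⟨h, Or.inr hMb⟩⟩
    rw [he]; exact hs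
  · have he : {x ∈ s | min (H x) M ≤ b} = {x ∈ s | H x ≤ b} := by
      ext x; simp only [Set.mem_sep_iff, min_le_iff]
      exact ⟨fun h => ⟨h.1, h.2.resolve_right hMb⟩, fun h => ⟨h.1, Or.inl h.2⟩⟩
    rw [he]; exact hH b

lemma qcAddConst {E : Type*} [AddCommMonoid E] [SMul ℝ E] {s : Set E} {H : E → ℝ}
    (hH : QuasiconvexOn ℝ s H) (m : ℝ) :
    QuasiconvexOn ℝ s (fun x => m + H x) := by
  intro b
  have he : {x ∈ s | m + H x ≤ b} = {x ∈ s | H x ≤ b - m} := by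
    ext x; exact ⟨fun h => ⟨h.1, by linarith [h.2]⟩, fun h => ⟨h.1, by linarith [h.2]⟩⟩
  rw [he]; exact hH (b - m)

lemma qcCompMonoOn {E : Type*} [AddCommMonoid E] [SMul ℝ E] {s : Set E} {f : E → ℝ}
    {t : Set ℝ} {g : ℝ → ℝ} (hf : QuasiconvexOn ℝ s f) (hmap : ∀ x ∈ s, f x ∈ t)
    (hg : MonotoneOn g t) : QuasiconvexOn ℝ s (fun x => g (f x)) := by
  rw [quasiconvexOn_iff_le_max] at hf ⊢
  refine ⟨hf.1, fun x hx y hy a b ha hb hab => ?_⟩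
  have hxy := hf.2 hx hy ha hb hab
  have hmem : a • x + b • y ∈ s := hf.1 hx hy ha hb hab
  rcases le_total (f x) (f y) with h | h
  · have hm : f x ⊔ f y = f y := sup_eq_right.mpr h
    rw [hm] at hxy
    exact le_trans (hg (hmap _ hmem) (hmap _ hy) hxy) (le_max_right _ _)
  · have hm : f x ⊔ f y = f x := sup_eq_left.mpr h
    rw [hm] at hxy
    exact le_trans (hg (hmap _ hmem) (hmap _ hx) hxy) (le_max_left _ _)

theorem stmt_18 {X : Type*} [AddCommGroup X] [Module ℝ X] [TopologicalSpace X]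
    [IsTopologicalAddGroup X] [ContinuousSMul ℝ X]
    (Y : Submodule ℝ X) (hYclosed : IsClosed (Y : Set X))
    (A : Set X) (hAopen : IsOpen A) (hAconv : Convex ℝ A)
    (hne : (A ∩ (Y : Set X)).Nonempty)
    (hQE : ∀ g : X → ℝ, ContinuousOn g (A ∩ (Y : Set X)) →
      QuasiconvexOn ℝ (A ∩ (Y : Set X)) g →
      ∃ G : X → ℝ, ContinuousOn G A ∧ QuasiconvexOn ℝ A G ∧
        ∀ x ∈ A ∩ (Y : Set X), G x = g x)
    (δ : X → ℝ) (hδcont : ContinuousOn δ A) (hδqc : QuasiconvexOn ℝ A δ)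
    (hδnonneg : ∀ x ∈ A, 0 ≤ δ x)
    (hδker : {x ∈ A | δ x = 0} = A ∩ (Y : Set X)) :
    ∀ f : X → ℝ, ContinuousOn f (A ∩ (Y : Set X)) →
      QuasiconvexOn ℝ (A ∩ (Y : Set X)) f →
      (∃ x ∈ A ∩ (Y : Set X), ∃ y ∈ A ∩ (Y : Set X), f x ≠ f y) →
      ∃ F : X → ℝ, ContinuousOn F A ∧ QuasiconvexOn ℝ A F ∧
        (∀ x ∈ A ∩ (Y : Set X), F x = f x) ∧
        F '' A = f '' (A ∩ (Y : Set X)) ∧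
        ∀ a : ℝ, IsGLB (F '' A) a →
          {x ∈ A | F x = a} = {y ∈ A ∩ (Y : Set X) | f y = a} := by
  intro f hfc hfq hfnc
  set S : Set X := A ∩ (Y : Set X) with hSdef
  set J : Set ℝ := f '' S with hJdef
  have hSsubA : S ⊆ A := inter_subset_left
  have hSconv : Convex ℝ S := hAconv.inter Y.convex
  have hJne : J.Nonempty := hne.image f
  have hJord : J.OrdConnected :=
    ((hSconv.isPreconnected).image f hfc).ordConnected
  have hmemJ : ∀ y ∈ S, f y ∈ J := fun y hy => ⟨y, hy, rfl⟩
  -- pick c strictly inside the range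
  obtain ⟨x₁, hx₁, y₁, hy₁, hxy⟩ := hfnc
  set v₁ : ℝ := min (f x₁) (f y₁) with hv₁
  set v₂ : ℝ := max (f x₁) (f y₁) with hv₂
  have hv₁J : v₁ ∈ J := by
    rcases min_cases (f x₁) (f y₁) with ⟨h, _⟩ | ⟨h, _⟩ <;> rw [hv₁, h]
    exacts [hmemJ x₁ hx₁, hmemJ y₁ hy₁]
  have hv₂J : v₂ ∈ J := by
    rcases max_cases (f x₁) (f y₁) with ⟨h, _⟩ | ⟨h, _⟩ <;> rw [hv₂, h]
    exacts [hmemJ x₁ hx₁, hmemJ y₁ hy₁]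
  have hv12 : v₁ < v₂ := min_lt_max.mpr hxy
  set c : ℝ := (v₁ + v₂) / 2 with hc
  have hv₁c : v₁ < c := by rw [hc]; linarith
  have hcv₂ : c < v₂ := by rw [hc]; linarith
  have hcJ : c ∈ J := hJord.out hv₁J hv₂J ⟨hv₁c.le, hcv₂.le⟩
  have hδS : ∀ y ∈ S, δ y = 0 := by
    intro y hy
    rw [← hδker] at hy
    exact hy.2
  -- Stage 1 : an extension with no values above sup J
  have stage1 : ∃ Fp : X → ℝ, ContinuousOn Fp A ∧ QuasiconvexOn ℝ A Fp ∧
      (∀ y ∈ S, Fp y = f y) ∧ (∀ x ∈ A, ∃ j ∈ J, Fp x ≤ j) := by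
    by_cases hBdd : BddAbove J
    · by_cases hMatt : sSup J ∈ J
      · obtain ⟨H, hHc, hHq, hHe⟩ := hQE f hfc hfq
        refine ⟨fun x => min (H x) (sSup J), hHc.inf continuousOn_const,
          qcMinConst hAconv hHq _, ?_, ?_⟩
        · intro y hy
          show min (H y) (sSup J) = f y
          rw [hHe y hy]
          exact min_eq_left (le_csSup hBdd (hmemJ y hy))
        · exact fun x _ => ⟨sSup J, hMatt, min_le_right _ _⟩
      · set M : ℝ := sSup J with hM
        set k : ℝ := M - c with hkdef
        have hcM : c < M := lt_of_lt_of_le hcv₂ (le_csSup hBdd hv₂J)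
        have hk : 0 < k := by rw [hkdef]; linarith
        have hckM : c + k = M := by rw [hkdef]; ring
        have hfltM : ∀ y ∈ S, f y < M := by
          intro y hy
          refine lt_of_le_of_ne (le_csSup hBdd (hmemJ y hy)) fun h => hMatt ?_
          exact h ▸ hmemJ y hy
        have hmaps : ∀ y ∈ S, f y ∈ Iio (c + k) := fun y hy => by
          rw [hckM]; exact hfltM y hy
        obtain ⟨H, hHc, hHq, hHe⟩ := hQE (fun x => sigmaFn c k (f x))
          (((sigmaFn_contOn c k hk).comp hfc) fun y hy => hmaps y hy)
          (qcCompMonoOn hfq hmaps (sigmaFn_monoOn c k hk))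
        refine ⟨fun x => tauFn c k (H x),
          (tauFn_cont c k hk).comp_continuousOn hHc,
          qcCompMonoOn hHq (fun x _ => mem_univ _) ((tauFn_mono c k hk).monotoneOn _),
          ?_, ?_⟩
        · intro y hy
          show tauFn c k (H y) = f y
          rw [hHe y hy]
          exact tauFn_sigmaFn c k hk (hmaps y hy)
        · intro x _
          have h1 : tauFn c k (H x) < M := hckM ▸ tauFn_lt c k hk (H x)
          obtain ⟨j, hjJ, hj⟩ := exists_lt_of_lt_csSup hJne h1
          exact ⟨j, hjJ, hj.le⟩
    · obtain ⟨H, hHc, hHq, hHe⟩ := hQE f hfc hfq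
      refine ⟨H, hHc, hHq, hHe, fun x _ => ?_⟩
      obtain ⟨j, hjJ, hj⟩ := not_bddAbove_iff.mp hBdd (H x)
      exact ⟨j, hjJ, hj.le⟩
  obtain ⟨Fp, hFpc, hFpq, hFpe, hFpup⟩ := stage1
  -- Stage 2 : fix the infimum side
  by_cases hBB : BddBelow J
  · set m : ℝ := sInf J with hm
    have hmc : m < c := lt_of_le_of_lt (csInf_le hBB hv₁J) hv₁c
    set F : X → ℝ := fun x => max (Fp x) (m + min (δ x) (c - m)) with hF
    have hFx' : ∀ x, F x = max (Fp x) (m + min (δ x) (c - m)) := fun x => by rw [hF]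
    have hext : ∀ y ∈ S, F y = f y := by
      intro y hy
      have h1 : δ y = 0 := hδS y hy
      have h2 : m ≤ f y := csInf_le hBB (hmemJ y hy)
      rw [hFx' y]
      simp only [h1, hFpe y hy]
      rw [min_eq_left (by linarith), add_zero]
      exact max_eq_left h2
    have hFge : ∀ x ∈ A, m ≤ F x := by
      intro x hx
      have h1 : 0 ≤ min (δ x) (c - m) := le_min (hδnonneg x hx) (by linarith)
      rw [hFx' x]
      exact le_trans (by linarith) (le_max_right _ _)
    have hargmin : ∀ x ∈ A, F x = m → x ∈ S ∧ f x = m := by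
      intro x hx hFx
      have h1 : m + min (δ x) (c - m) ≤ F x := by
        rw [hFx' x]; exact le_max_right _ _
      rw [hFx] at h1
      have h2 : min (δ x) (c - m) ≤ 0 := by linarith
      have h3 : δ x ≤ 0 := by
        rcases min_le_iff.mp h2 with h | h
        · exact h
        · linarith
      have h4 : δ x = 0 := le_antisymm h3 (hδnonneg x hx)
      have hxS : x ∈ S := by rw [← hδker]; exact ⟨hx, h4⟩
      exact ⟨hxS, by rw [← hext x hxS, hFx]⟩
    have hup : ∀ x ∈ A, ∃ j ∈ J, F x ≤ j := by
      intro x hx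
      obtain ⟨j₁, hj₁J, hj₁⟩ := hFpup x hx
      refine ⟨max j₁ c, ?_, ?_⟩
      · rcases le_total j₁ c with h | h
        · rw [max_eq_right h]; exact hcJ
        · rw [max_eq_left h]; exact hj₁J
      · have h1 : m + min (δ x) (c - m) ≤ c := by
          have := min_le_right (δ x) (c - m); linarith
        exact max_le (le_trans hj₁ (le_max_left _ _)) (le_trans h1 (le_max_right _ _))
    have hlow : ∀ x ∈ A, ∃ j ∈ J, j ≤ F x := by
      intro x hx
      rcases eq_or_lt_of_le (hFge x hx) with h | h
      · obtain ⟨hxS, hfx⟩ := hargmin x hx h.symm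
        exact ⟨f x, hmemJ x hxS, by rw [← h, hfx]⟩
      · by_contra hcon
        push_neg at hcon
        have hlb : F x ∈ lowerBounds J := fun j hj => (hcon j hj).le
        have := le_csInf hJne hlb
        rw [← hm] at this
        linarith
    have himg : F '' A = J := by
      apply Subset.antisymm
      · rintro _ ⟨x, hx, rfl⟩
        obtain ⟨j₁, hj₁J, hj₁⟩ := hlow x hx
        obtain ⟨j₂, hj₂J, hj₂⟩ := hup x hx
        exact hJord.out hj₁J hj₂J ⟨hj₁, hj₂⟩
      · rintro _ ⟨y, hy, rfl⟩
        exact ⟨y, hSsubA hy, hext y hy⟩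
    refine ⟨F, hFpc.sup (continuousOn_const.add (hδcont.inf continuousOn_const)),
      hFpq.sup (qcAddConst (qcMinConst hAconv hδqc _) m), hext, himg, ?_⟩
    intro a hglb
    rw [himg] at hglb
    have ha : a = m := by rw [hm, hglb.csInf_eq hJne]
    subst ha
    ext x
    constructor
    · rintro ⟨hxA, hFx⟩
      obtain ⟨hxS, hfx⟩ := hargmin x hxA hFx
      exact ⟨hxS, hfx⟩
    · rintro ⟨hxS, hfx⟩
      exact ⟨hSsubA hxS, by rw [hext x hxS, hfx]⟩
  · have himg : Fp '' A = J := by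
      apply Subset.antisymm
      · rintro _ ⟨x, hx, rfl⟩
        obtain ⟨j₂, hj₂J, hj₂⟩ := hFpup x hx
        obtain ⟨j₁, hj₁J, hj₁⟩ := not_bddBelow_iff.mp hBB (Fp x)
        exact hJord.out hj₁J hj₂J ⟨hj₁.le, hj₂⟩
      · rintro _ ⟨y, hy, rfl⟩
        exact ⟨y, hSsubA hy, hFpe y hy⟩
    refine ⟨Fp, hFpc, hFpq, hFpe, himg, ?_⟩
    intro a hglb
    rw [himg] at hglb
    obtain ⟨j, hjJ, hj⟩ := not_bddBelow_iff.mp hBB a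
    exact absurd (hglb.1 hjJ) (not_le.mpr hj)
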